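/- In the random dyadic lattice model on ℝ^d (each generation's parent grid chosen uniformly and independently among 2^d translates), for fixed parameters r ∈ ℕ and γ ∈ (0,1), the probability that a fixed cube Q is bad — i.e. there exists R in the same lattice with ℓ(R) ≥ 2^r ℓ(Q) and dist(Q, sk(R)) < ℓ(R)^{1-γ} ℓ(Q)^γ — is at most C₁(d,γ) 2^{-c₂ γ r} for constants C₁, c₂ > 0 depending only on d and γ. -/

import Mathlib

open MeasureTheory

def Msum (s : ℕ) (c : Fin s → Bool) : ℕ := ∑ k, if c k then 2 ^ (k : ℕ) else 0

lemma Msum_eq (s : ℕ) (c : Fin s → Bool) :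
    Msum s c = (finFunctionFinEquiv (fun k => finTwoEquiv.symm (c k)) : ℕ) := by
  rw [finFunctionFinEquiv_apply]
  refine Finset.sum_congr rfl fun k _ => ?_
  cases h : c k <;> simp [h, finTwoEquiv]

lemma Msum_lt (s : ℕ) (c : Fin s → Bool) : Msum s c < 2 ^ s := by
  rw [Msum_eq]; exact (finFunctionFinEquiv _).2

lemma Msum_injective (s : ℕ) : Function.Injective (Msum s) := by
  intro c c' h
  rw [Msum_eq, Msum_eq] at h
  have h3 := finFunctionFinEquiv.injective (Fin.val_injective h)
  funext k
  exact finTwoEquiv.symm.injective (congrFun h3 k)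

lemma card_bad_le (s : ℕ) (hs : 1 ≤ s) (α β : ℝ) (hαβ : α ≤ β)
    (S : Finset (Fin s → Bool))
    (hS : ∀ c ∈ S, ∃ n : ℤ, α < (Msum s c : ℝ) + n * 2 ^ (s - 1) ∧
      (Msum s c : ℝ) + n * 2 ^ (s - 1) < β) :
    (S.card : ℝ) ≤ 2 * (β - α + 1) := by
  classical
  obtain ⟨s', rfl⟩ : ∃ s', s = s' + 1 := ⟨s - 1, by omega⟩
  set Pb : (Fin (s' + 1) → Bool) → Prop := fun c =>
    ∃ n : ℤ, α < (Msum (s' + 1) c : ℝ) + n * 2 ^ (s' + 1 - 1) ∧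
      (Msum (s' + 1) c : ℝ) + n * 2 ^ (s' + 1 - 1) < β with hPb
  set f : (Fin (s' + 1) → Bool) → ℤ × Bool := fun c =>
    if h : Pb c then
      ((Msum (s' + 1) c : ℤ) + Classical.choose h * 2 ^ s',
        decide (Msum (s' + 1) c < 2 ^ s'))
    else (0, false) with hf
  have hmaps : ∀ c ∈ S, f c ∈ (Finset.Icc ⌈α⌉ ⌊β⌋) ×ˢ (Finset.univ : Finset Bool) := by
    intro c hc
    have h : Pb c := hS c hc
    have spec := Classical.choose_spec h
    rw [hf]
    simp only [dif_pos h, Finset.mem_product, Finset.mem_Icc, Finset.mem_univ, and_true]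
    constructor
    · rw [Int.ceil_le]; push_cast
      simp only [Nat.add_sub_cancel] at spec
      exact le_of_lt spec.1
    · rw [Int.le_floor]; push_cast
      simp only [Nat.add_sub_cancel] at spec
      exact le_of_lt spec.2
  have hinj : Set.InjOn f S := by
    intro c hc c' hc' heq
    have h : Pb c := hS c hc
    have h' : Pb c' := hS c' hc'
    rw [hf] at heq
    simp only [dif_pos h, dif_pos h', Prod.mk.injEq] at heq
    obtain ⟨h1, h2⟩ := heq
    have hiff := decide_eq_decide.mp h2
    have hb : Msum (s' + 1) c < 2 * 2 ^ s' := by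
      have := Msum_lt (s' + 1) c; rw [pow_succ] at this; omega
    have hb' : Msum (s' + 1) c' < 2 * 2 ^ s' := by
      have := Msum_lt (s' + 1) c'; rw [pow_succ] at this; omega
    have hbz : ((Msum (s' + 1) c : ℤ)) < 2 * 2 ^ s' := by exact_mod_cast hb
    have hbz' : ((Msum (s' + 1) c' : ℤ)) < 2 * 2 ^ s' := by exact_mod_cast hb'
    have ha0 : (0:ℤ) ≤ (Msum (s' + 1) c : ℤ) := Int.natCast_nonneg _
    have ha0' : (0:ℤ) ≤ (Msum (s' + 1) c' : ℤ) := Int.natCast_nonneg _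
    have hdvd : (2:ℤ) ^ s' ∣ ((Msum (s' + 1) c : ℤ) - (Msum (s' + 1) c' : ℤ)) := by
      refine ⟨Classical.choose h' - Classical.choose h, ?_⟩
      linarith [h1]
    have habs : |(Msum (s' + 1) c : ℤ) - (Msum (s' + 1) c' : ℤ)| < 2 ^ s' := by
      by_cases hp : Msum (s' + 1) c < 2 ^ s'
      · have hp' : Msum (s' + 1) c' < 2 ^ s' := hiff.mp hp
        have q1 : ((Msum (s' + 1) c : ℤ)) < 2 ^ s' := by exact_mod_cast hp
        have q2 : ((Msum (s' + 1) c' : ℤ)) < 2 ^ s' := by exact_mod_cast hp'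
        rw [abs_lt]; constructor <;> linarith
      · have hp' : ¬ Msum (s' + 1) c' < 2 ^ s' := fun hh => hp (hiff.mpr hh)
        have q1 : ((2:ℤ) ^ s') ≤ (Msum (s' + 1) c : ℤ) := by exact_mod_cast Nat.le_of_not_lt hp
        have q2 : ((2:ℤ) ^ s') ≤ (Msum (s' + 1) c' : ℤ) := by exact_mod_cast Nat.le_of_not_lt hp'
        rw [abs_lt]; constructor <;> linarith
    have hz : (Msum (s' + 1) c : ℤ) - (Msum (s' + 1) c' : ℤ) = 0 :=
      Int.eq_zero_of_abs_lt_dvd hdvd habs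
    have haa : Msum (s' + 1) c = Msum (s' + 1) c' := by omega
    exact Msum_injective _ haa
  have hcard := Finset.card_le_card_of_injOn f hmaps hinj
  rw [Finset.card_product, Finset.card_univ] at hcard
  have hIcc : (Finset.Icc ⌈α⌉ ⌊β⌋).card = (⌊β⌋ + 1 - ⌈α⌉).toNat := Int.card_Icc _ _
  rw [hIcc] at hcard
  have hBool : Fintype.card Bool = 2 := by simp
  rw [hBool] at hcard
  have htn : (((⌊β⌋ + 1 - ⌈α⌉).toNat : ℝ)) ≤ β - α + 1 := by
    rcases le_or_gt (⌊β⌋ + 1 - ⌈α⌉) 0 with hz | hz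
    · rw [Int.toNat_of_nonpos hz]
      push_cast
      linarith
    · have := Int.toNat_of_nonneg hz.le
      have hcast : (((⌊β⌋ + 1 - ⌈α⌉).toNat : ℝ)) = (⌊β⌋:ℝ) + 1 - ⌈α⌉ := by
        exact_mod_cast congrArg (Int.cast : ℤ → ℝ) this
      rw [hcast]
      linarith [Int.floor_le β, Int.le_ceil α]
  calc (S.card : ℝ) ≤ ((⌊β⌋ + 1 - ⌈α⌉).toNat * 2 : ℕ) := by exact_mod_cast hcard
    _ = 2 * ((⌊β⌋ + 1 - ⌈α⌉).toNat : ℝ) := by push_cast; ring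
    _ ≤ 2 * (β - α + 1) := by linarith

lemma cyl_le (d : ℕ) (hd : 1 ≤ d) (P : Measure (ℕ → Fin d → Bool))
    (hP : ∀ (n : ℕ) (b : Fin n → Fin d → Bool),
      P {ω | ∀ k : Fin n, ω (k : ℕ) = b k} = ((1 : ENNReal) / 2 ^ d) ^ n)
    (s : ℕ) (i : Fin d) (c : Fin s → Bool) :
    P {ω | ∀ k : Fin s, ω (k : ℕ) i = c k} ≤ ((1:ENNReal) / 2) ^ s := by
  classical
  set Ext : Finset (Fin s → Fin d → Bool) :=
    Finset.univ.filter (fun b => ∀ k, b k i = c k) with hExt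
  have hsub : {ω : ℕ → Fin d → Bool | ∀ k : Fin s, ω (k : ℕ) i = c k} ⊆
      ⋃ b ∈ Ext, {ω : ℕ → Fin d → Bool | ∀ k : Fin s, ω (k : ℕ) = b k} := by
    intro ω hω
    simp only [Set.mem_iUnion]
    exact ⟨fun k : Fin s => ω (k : ℕ), by
      simp only [hExt, Finset.mem_filter, Finset.mem_univ, true_and]; exact fun k => hω k,
      fun k => rfl⟩
  have hcard : Ext.card ≤ 2 ^ ((d - 1) * s) := by
    have : Ext.card ≤ (Finset.univ : Finset (Fin s → {j : Fin d // j ≠ i} → Bool)).card := by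
      refine Finset.card_le_card_of_injOn (fun b => fun k j => b k j.1)
        (fun _ _ => Finset.mem_univ _) ?_
      intro b hb b' hb' hfeq
      simp only [Finset.coe_filter, Set.mem_setOf_eq, hExt, Finset.mem_univ, true_and] at hb hb'
      funext k j
      by_cases hj : j = i
      · subst hj; rw [hb k, hb' k]
      · exact congrFun (congrFun hfeq k) ⟨j, hj⟩
    refine this.trans ?_
    rw [Finset.card_univ, Fintype.card_fun, Fintype.card_fun]
    have : Fintype.card {j : Fin d // j ≠ i} = d - 1 := by simp
    rw [this, ← pow_mul]
    simp
  calc P {ω : ℕ → Fin d → Bool | ∀ k : Fin s, ω (k : ℕ) i = c k}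
      ≤ ∑ b ∈ Ext, P {ω : ℕ → Fin d → Bool | ∀ k : Fin s, ω (k : ℕ) = b k} :=
        (measure_mono hsub).trans (measure_biUnion_finset_le _ _)
    _ = Ext.card • ((1:ENNReal) / 2 ^ d) ^ s := by
        rw [Finset.sum_congr rfl (fun b _ => hP s b), Finset.sum_const]
    _ ≤ (2 ^ ((d - 1) * s)) • ((1:ENNReal) / 2 ^ d) ^ s := by
        exact smul_le_smul_of_nonneg_right hcard zero_le
    _ = ((1:ENNReal) / 2) ^ s := by
        rw [nsmul_eq_mul]
        push_cast
        rw [one_div, one_div, ENNReal.inv_pow, ← pow_mul]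
        have hds : d * s = (d - 1) * s + s := by
          cases d with
          | zero => omega
          | succ d' => simp [Nat.succ_sub_one, Nat.succ_mul]
        rw [hds, pow_add, ← mul_assoc, ← mul_pow,
          ENNReal.mul_inv_cancel (by norm_num) (by norm_num), one_pow, one_mul]

lemma sum_eq_Msum (s : ℕ) (ℓ : ℝ) (c : ℕ → Bool) :
    ∑ k ∈ Finset.range s, (if c k then (2:ℝ) ^ k * ℓ else 0)
      = (Msum s (fun k => c k) : ℝ) * ℓ := by
  unfold Msum
  push_cast
  rw [Finset.sum_mul, Fin.sum_univ_eq_sum_range (fun k => (if c k then (2:ℝ)^k else 0) * ℓ)]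
  refine Finset.sum_congr rfl fun k _ => ?_
  by_cases h : c k <;> simp [h]
lemma scaleP (d : ℕ) (hd : 1 ≤ d) (γ : ℝ) (hγ0 : 0 < γ) (hγ1 : γ < 1)
    (P : Measure (ℕ → Fin d → Bool))
    (hP : ∀ (n : ℕ) (b : Fin n → Fin d → Bool),
      P {ω | ∀ k : Fin n, ω (k : ℕ) = b k} = ((1 : ENNReal) / 2 ^ d) ^ n)
    (s : ℕ) (hs : 1 ≤ s) (i : Fin d) (ℓ : ℝ) (hℓ : 0 < ℓ) (a : ℝ) :
    P {ω | ∃ n : ℤ,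
        a - ((2:ℝ) ^ s * ℓ) ^ (1 - γ) * ℓ ^ γ
          < (Msum s (fun k => ω (k : ℕ) i) : ℝ) * ℓ + n * ((2:ℝ) ^ (s - 1) * ℓ) ∧
        (Msum s (fun k => ω (k : ℕ) i) : ℝ) * ℓ + n * ((2:ℝ) ^ (s - 1) * ℓ)
          < a + ℓ + ((2:ℝ) ^ s * ℓ) ^ (1 - γ) * ℓ ^ γ}
      ≤ ENNReal.ofReal (8 * (2:ℝ) ^ (-(γ * (s:ℝ)))) := by
  classical
  set ε : ℝ := ((2:ℝ) ^ s * ℓ) ^ (1 - γ) * ℓ ^ γ with hε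
  set T : ℝ := (2:ℝ) ^ ((s:ℝ) * (1 - γ)) with hT
  have hT1 : 1 ≤ T := by
    rw [hT]
    apply Real.one_le_rpow (by norm_num)
    have : (0:ℝ) ≤ (s:ℝ) := Nat.cast_nonneg s
    nlinarith
  have hεℓ : ε = T * ℓ := by
    rw [hε, hT, Real.mul_rpow (by positivity) hℓ.le, ← Real.rpow_natCast (2:ℝ) s,
      ← Real.rpow_mul (by norm_num : (0:ℝ) ≤ 2), mul_assoc, ← Real.rpow_add hℓ]
    norm_num
  have hε0 : 0 ≤ ε := by rw [hεℓ]; positivity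
  set α : ℝ := (a - ε) / ℓ with hα
  set β : ℝ := (a + ℓ + ε) / ℓ with hβ
  set BadC : Finset (Fin s → Bool) := Finset.univ.filter (fun c =>
    ∃ n : ℤ, a - ε < (Msum s c : ℝ) * ℓ + n * ((2:ℝ) ^ (s - 1) * ℓ) ∧
      (Msum s c : ℝ) * ℓ + n * ((2:ℝ) ^ (s - 1) * ℓ) < a + ℓ + ε) with hBadC
  have hsub : {ω : ℕ → Fin d → Bool | ∃ n : ℤ,
        a - ε < (Msum s (fun k => ω (k : ℕ) i) : ℝ) * ℓ + n * ((2:ℝ) ^ (s - 1) * ℓ) ∧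
        (Msum s (fun k => ω (k : ℕ) i) : ℝ) * ℓ + n * ((2:ℝ) ^ (s - 1) * ℓ) < a + ℓ + ε}
      ⊆ ⋃ c ∈ BadC, {ω : ℕ → Fin d → Bool | ∀ k : Fin s, ω (k : ℕ) i = c k} := by
    intro ω hω
    simp only [Set.mem_iUnion]
    exact ⟨fun k : Fin s => ω (k : ℕ) i, by
      simp only [hBadC, Finset.mem_filter, Finset.mem_univ, true_and]; exact hω,
      fun k => rfl⟩
  have hcount : (BadC.card : ℝ) ≤ 2 * (β - α + 1) := by
    refine card_bad_le s hs α β ?_ BadC ?_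
    · rw [hα, hβ]
      gcongr
      linarith
    · intro c hc
      simp only [hBadC, Finset.mem_filter, Finset.mem_univ, true_and] at hc
      obtain ⟨n, h1, h2⟩ := hc
      refine ⟨n, ?_, ?_⟩
      · rw [hα, div_lt_iff₀ hℓ]
        have hexp : ((Msum s c : ℝ) + n * 2 ^ (s - 1)) * ℓ
            = (Msum s c : ℝ) * ℓ + n * ((2:ℝ) ^ (s - 1) * ℓ) := by ring
        linarith [hexp]
      · rw [hβ, lt_div_iff₀ hℓ]
        have hexp : ((Msum s c : ℝ) + n * 2 ^ (s - 1)) * ℓ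
            = (Msum s c : ℝ) * ℓ + n * ((2:ℝ) ^ (s - 1) * ℓ) := by ring
        linarith [hexp]
  have hβα : β - α = 1 + 2 * T := by
    rw [hβ, hα, hεℓ, div_sub_div_same]
    field_simp
    ring
  have hhalf : ENNReal.ofReal ((1/2:ℝ) ^ s) = ((1:ENNReal) / 2) ^ s := by
    rw [ENNReal.ofReal_pow (by norm_num)]
    norm_num [ENNReal.ofReal_div_of_pos]
  have key : 2 * (β - α + 1) * ((1/2:ℝ)) ^ s ≤ 8 * (2:ℝ) ^ (-(γ * (s:ℝ))) := by
    have hhalfr : ((1/2:ℝ)) ^ s = (2:ℝ) ^ (-(s:ℝ)) := by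
      rw [Real.rpow_neg (by norm_num), Real.rpow_natCast, one_div, inv_pow]
    rw [hβα, hhalfr]
    have h8 : 2 * ((1 + 2 * T) + 1) ≤ 8 * T := by linarith
    have hpos : (0:ℝ) < (2:ℝ) ^ (-(s:ℝ)) := Real.rpow_pos_of_pos (by norm_num) _
    refine (mul_le_mul_of_nonneg_right h8 hpos.le).trans (le_of_eq ?_)
    rw [hT, mul_assoc, ← Real.rpow_add (by norm_num : (0:ℝ) < 2)]
    have : (s:ℝ) * (1 - γ) + -(s:ℝ) = -(γ * (s:ℝ)) := by ring
    rw [this]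
  calc P {ω : ℕ → Fin d → Bool | ∃ n : ℤ,
        a - ε < (Msum s (fun k => ω (k : ℕ) i) : ℝ) * ℓ + n * ((2:ℝ) ^ (s - 1) * ℓ) ∧
        (Msum s (fun k => ω (k : ℕ) i) : ℝ) * ℓ + n * ((2:ℝ) ^ (s - 1) * ℓ) < a + ℓ + ε}
      ≤ ∑ c ∈ BadC, P {ω : ℕ → Fin d → Bool | ∀ k : Fin s, ω (k : ℕ) i = c k} :=
        (measure_mono hsub).trans (measure_biUnion_finset_le _ _)
    _ ≤ ∑ c ∈ BadC, ((1:ENNReal) / 2) ^ s :=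
        Finset.sum_le_sum fun c _ => cyl_le d hd P hP s i c
    _ = (BadC.card : ENNReal) * ((1:ENNReal) / 2) ^ s := by
        rw [Finset.sum_const, nsmul_eq_mul]
    _ ≤ ENNReal.ofReal (2 * (β - α + 1)) * ENNReal.ofReal ((1/2:ℝ) ^ s) := by
        rw [hhalf]
        exact mul_le_mul_left (by
          rw [← ENNReal.ofReal_natCast]
          exact ENNReal.ofReal_le_ofReal hcount) _
    _ = ENNReal.ofReal (2 * (β - α + 1) * ((1/2:ℝ)) ^ s) := by
        rw [← ENNReal.ofReal_mul (by rw [hβα]; linarith)]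
    _ ≤ ENNReal.ofReal (8 * (2:ℝ) ^ (-(γ * (s:ℝ)))) := ENNReal.ofReal_le_ofReal key

/-- in the random dyadic lattice model (each generation's parent grid
chosen uniformly and independently among the `2^d` translates, encoded by
`ω : ℕ → Fin d → Bool` with `P` making the coordinates independent and uniform), for
fixed `r ≥ 1` and `γ ∈ (0,1)`, the probability that a fixed cube `Q` (of side `ℓ`,
lower corner `q`, belonging to the initial fine grid) is bad — i.e. there is a scale
`s ≥ r` at which `Q` comes within distance `(2^s ℓ)^{1-γ} ℓ^γ` of the skeleton
(children-boundary hyperplanes, of spacing `2^{s-1}ℓ`, offset by the accumulated random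
translations `Σ_{k<s} 2^k ℓ·ω_k`) of some cube `R` of the lattice with
`ℓ(R) = 2^s ℓ ≥ 2^r ℓ` — is at most `C₁ 2^{-c₂ γ r}` with `C₁, c₂ > 0` depending only
on `d` and `γ`. -/
theorem probability_bad_cube (d : ℕ) (hd : 1 ≤ d) (γ : ℝ) (hγ0 : 0 < γ) (hγ1 : γ < 1) :
    ∃ C₁ c₂ : ℝ, 0 < C₁ ∧ 0 < c₂ ∧
      ∀ (r : ℕ), 1 ≤ r → ∀ (ℓ : ℝ), 0 < ℓ → ∀ (q : Fin d → ℝ),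
      ∀ (P : Measure (ℕ → Fin d → Bool)), IsProbabilityMeasure P →
        (∀ (n : ℕ) (b : Fin n → Fin d → Bool),
          P {ω | ∀ k : Fin n, ω (k : ℕ) = b k} = ((1 : ENNReal) / 2 ^ d) ^ n) →
        (P {ω | ∃ s : ℕ, r ≤ s ∧ ∃ x : Fin d → ℝ,
            (∀ i, q i ≤ x i ∧ x i ≤ q i + ℓ) ∧
            ∃ i : Fin d, ∃ n : ℤ,
              |x i - ((∑ k ∈ Finset.range s, (if ω k i then (2 : ℝ) ^ k * ℓ else 0))
                  + (n : ℝ) * ((2 : ℝ) ^ (s - 1) * ℓ))|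
                < ((2 : ℝ) ^ s * ℓ) ^ (1 - γ) * ℓ ^ γ}).toReal
          ≤ C₁ * (2 : ℝ) ^ (-(c₂ * γ * (r : ℝ))) := by
  classical
  set ρ : ℝ := (2:ℝ) ^ (-γ) with hρ
  have hρ0 : 0 < ρ := Real.rpow_pos_of_pos (by norm_num) _
  have hρ1 : ρ < 1 := by
    rw [hρ]
    exact Real.rpow_lt_one_of_one_lt_of_neg (by norm_num) (by linarith)
  have hd0 : (0:ℝ) < d := by exact_mod_cast hd
  have h1ρ : (0:ℝ) < 1 - ρ := by linarith
  refine ⟨8 * d * (1 - ρ)⁻¹, 1, by positivity, one_pos, ?_⟩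
  intro r hr ℓ hℓ q P hProb hP
  set A : ℕ → Fin d → Set (ℕ → Fin d → Bool) := fun s i => {ω | ∃ n : ℤ,
      q i - ((2:ℝ) ^ s * ℓ) ^ (1 - γ) * ℓ ^ γ
        < (Msum s (fun k => ω (k : ℕ) i) : ℝ) * ℓ + n * ((2:ℝ) ^ (s - 1) * ℓ) ∧
      (Msum s (fun k => ω (k : ℕ) i) : ℝ) * ℓ + n * ((2:ℝ) ^ (s - 1) * ℓ)
        < q i + ℓ + ((2:ℝ) ^ s * ℓ) ^ (1 - γ) * ℓ ^ γ} with hA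
  have hsub : {ω : ℕ → Fin d → Bool | ∃ s : ℕ, r ≤ s ∧ ∃ x : Fin d → ℝ,
      (∀ i, q i ≤ x i ∧ x i ≤ q i + ℓ) ∧
      ∃ i : Fin d, ∃ n : ℤ,
        |x i - ((∑ k ∈ Finset.range s, (if ω k i then (2 : ℝ) ^ k * ℓ else 0))
            + (n : ℝ) * ((2 : ℝ) ^ (s - 1) * ℓ))|
          < ((2 : ℝ) ^ s * ℓ) ^ (1 - γ) * ℓ ^ γ}
      ⊆ ⋃ (t : ℕ), ⋃ (i : Fin d), A (r + t) i := by
    rintro ω ⟨s, hrs, x, hx, i, n, habs⟩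
    obtain ⟨t, rfl⟩ : ∃ t, s = r + t := ⟨s - r, by omega⟩
    refine Set.mem_iUnion.2 ⟨t, Set.mem_iUnion.2 ⟨i, ?_⟩⟩
    rw [hA]
    simp only [Set.mem_setOf_eq]
    refine ⟨n, ?_, ?_⟩ <;>
    · rw [sum_eq_Msum (r + t) ℓ (fun k => ω k i)] at habs
      rw [abs_lt] at habs
      obtain ⟨h1, h2⟩ := habs
      obtain ⟨hq1, hq2⟩ := hx i
      linarith
  have hmain : P {ω : ℕ → Fin d → Bool | ∃ s : ℕ, r ≤ s ∧ ∃ x : Fin d → ℝ,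
      (∀ i, q i ≤ x i ∧ x i ≤ q i + ℓ) ∧
      ∃ i : Fin d, ∃ n : ℤ,
        |x i - ((∑ k ∈ Finset.range s, (if ω k i then (2 : ℝ) ^ k * ℓ else 0))
            + (n : ℝ) * ((2 : ℝ) ^ (s - 1) * ℓ))|
          < ((2 : ℝ) ^ s * ℓ) ^ (1 - γ) * ℓ ^ γ}
      ≤ ENNReal.ofReal (8 * d * (1 - ρ)⁻¹ * (2:ℝ) ^ (-(γ * (r:ℝ)))) := by
    calc P _ ≤ P (⋃ (t : ℕ), ⋃ (i : Fin d), A (r + t) i) := measure_mono hsub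
      _ ≤ ∑' (t : ℕ), P (⋃ (i : Fin d), A (r + t) i) := measure_iUnion_le _
      _ ≤ ∑' (t : ℕ), ∑' (i : Fin d), P (A (r + t) i) :=
          ENNReal.tsum_le_tsum fun t => measure_iUnion_le _
      _ ≤ ∑' (t : ℕ), ∑' (i : Fin d),
            ENNReal.ofReal (8 * (2:ℝ) ^ (-(γ * ((r + t : ℕ):ℝ)))) := by
          refine ENNReal.tsum_le_tsum fun t => ENNReal.tsum_le_tsum fun i => ?_
          exact scaleP d hd γ hγ0 hγ1 P hP (r + t) (by omega) i ℓ hℓ (q i)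
      _ = ∑' (t : ℕ), (d : ENNReal) *
            ENNReal.ofReal (8 * (2:ℝ) ^ (-(γ * ((r + t : ℕ):ℝ)))) := by
          refine tsum_congr fun t => ?_
          rw [tsum_fintype, Finset.sum_const, Finset.card_univ, Fintype.card_fin, nsmul_eq_mul]
      _ = ENNReal.ofReal (8 * d * (1 - ρ)⁻¹ * (2:ℝ) ^ (-(γ * (r:ℝ)))) := by
          have hsplit : ∀ t : ℕ, (8 : ℝ) * (2:ℝ) ^ (-(γ * ((r + t : ℕ):ℝ)))
              = 8 * (2:ℝ) ^ (-(γ * (r:ℝ))) * ρ ^ t := by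
            intro t
            rw [hρ, ← Real.rpow_natCast ((2:ℝ) ^ (-γ)) t,
              ← Real.rpow_mul (by norm_num : (0:ℝ) ≤ 2), mul_assoc,
              ← Real.rpow_add (by norm_num : (0:ℝ) < 2)]
            push_cast
            ring_nf
          calc ∑' (t : ℕ), (d : ENNReal) *
                ENNReal.ofReal (8 * (2:ℝ) ^ (-(γ * ((r + t : ℕ):ℝ))))
              = ∑' (t : ℕ), (d : ENNReal) *
                (ENNReal.ofReal (8 * (2:ℝ) ^ (-(γ * (r:ℝ)))) * ENNReal.ofReal ρ ^ t) := by
                refine tsum_congr fun t => ?_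
                rw [hsplit t, ENNReal.ofReal_mul (by positivity), ENNReal.ofReal_pow hρ0.le]
            _ = (d : ENNReal) * (ENNReal.ofReal (8 * (2:ℝ) ^ (-(γ * (r:ℝ)))) *
                  ∑' (t : ℕ), ENNReal.ofReal ρ ^ t) := by
                rw [← ENNReal.tsum_mul_left, ← ENNReal.tsum_mul_left]
            _ = (d : ENNReal) * (ENNReal.ofReal (8 * (2:ℝ) ^ (-(γ * (r:ℝ)))) *
                  (1 - ENNReal.ofReal ρ)⁻¹) := by rw [ENNReal.tsum_geometric]
            _ = ENNReal.ofReal (8 * d * (1 - ρ)⁻¹ * (2:ℝ) ^ (-(γ * (r:ℝ)))) := by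
                rw [← ENNReal.ofReal_one, ← ENNReal.ofReal_sub _ hρ0.le,
                  ← ENNReal.ofReal_inv_of_pos (by linarith),
                  ← ENNReal.ofReal_natCast d,
                  ← ENNReal.ofReal_mul (by positivity),
                  ← ENNReal.ofReal_mul (by positivity)]
                congr 1
                ring
  have hfin : (0:ℝ) ≤ 8 * d * (1 - ρ)⁻¹ * (2:ℝ) ^ (-(1 * γ * (r:ℝ))) := by positivity
  refine ENNReal.toReal_le_of_le_ofReal hfin ?_
  refine hmain.trans (le_of_eq ?_)
  congr 2
  ring_nf
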